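/- Let d ≥ 3 and let G = (V, E) be a d-regular finite simple bipartite graph with bipartition (A, B). Let A_1 ⊆ A be such that distinct vertices of A_1 have disjoint neighborhoods, and suppose that every vertex of A ∖ A_1 has at least one neighbor in N(A_1) = ⋃_{a ∈ A_1} N(a). Then (|A| − |A_1|)·(d − 1) ≥ (|B| − d·|A_1|)·d, and consequently |A_1| ≥ |A|/(d² − d + 1). -/

import Mathlib

open SimpleGraph Finset

/-- `G` contains a path of order `k` (i.e., with `k` vertices). -/
def HasPathOfOrder {V : Type*} (G : SimpleGraph V) (k : ℕ) : Prop :=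
  ∃ (u v : V) (w : G.Walk u v), w.IsPath ∧ w.length + 1 = k

/-- `F` is a `k`-path vertex cover of `G`: the subgraph induced on the
complement of `F` contains no path of order `k`. -/
def IsPathVertexCover {V : Type*} (G : SimpleGraph V) (k : ℕ) (F : Finset V) : Prop :=
  ¬ HasPathOfOrder (G.induce ((↑F : Set V)ᶜ)) k

/-- `psi G k` is the minimum cardinality of a `k`-path vertex cover of `G`. -/
noncomputable def psi {V : Type*} [Fintype V] (G : SimpleGraph V) (k : ℕ) : ℕ :=
  sInf {n | ∃ F : Finset V, IsPathVertexCover G k F ∧ F.card = n}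

lemma doublecount {V : Type*} [Fintype V] [DecidableEq V] (G : SimpleGraph V)
    [DecidableRel G.Adj] (P Q : Finset V) :
    ∑ a ∈ P, (Q.filter (fun b => G.Adj a b)).card
      = ∑ b ∈ Q, (P.filter (fun a => G.Adj b a)).card := by
  simp_rw [Finset.card_filter]
  rw [Finset.sum_comm]
  refine Finset.sum_congr rfl fun b _ => Finset.sum_congr rfl fun a _ => by
    simp [G.adj_comm]


/-- Counting step for `Approx3` on `d`-regular bipartite graphs (`d ≥ 3`):
under the same hypotheses as before,
`(|A| - |A₁|)·(d - 1) ≥ (|B| - d·|A₁|)·d`, and consequently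
`|A₁| ≥ |A|/(d² - d + 1)`. -/
theorem stmt_19 {V : Type*} [Fintype V] [DecidableEq V] (G : SimpleGraph V)
    [DecidableRel G.Adj]
    (d : ℕ) (hd : 3 ≤ d) (hreg : G.IsRegularOfDegree d)
    (A B : Finset V) (hpart : A ∪ B = Finset.univ) (hdisj : Disjoint A B)
    (hbip : ∀ u v, G.Adj u v → (u ∈ A ∧ v ∈ B) ∨ (u ∈ B ∧ v ∈ A))
    (A1 : Finset V) (hA1 : A1 ⊆ A)
    (hnbr : ∀ a ∈ A1, ∀ a' ∈ A1, a ≠ a' → ∀ b, G.Adj a b → ¬G.Adj a' b)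
    (hdom : ∀ v ∈ A \ A1, ∃ w, G.Adj v w ∧ ∃ a ∈ A1, G.Adj a w) :
    ((B.card : ℤ) - d * A1.card) * d ≤ ((A.card : ℤ) - A1.card) * (d - 1) ∧
      A.card ≤ (d ^ 2 - d + 1) * A1.card := by
  classical
  set N1 : Finset V := A1.biUnion (fun a => G.neighborFinset a) with hN1
  have hmemN1 : ∀ b, b ∈ N1 ↔ ∃ a ∈ A1, G.Adj a b := by
    intro b; simp [hN1, mem_neighborFinset]
  have hN1card : N1.card = d * A1.card := by
    rw [hN1, Finset.card_biUnion]
    · rw [Finset.sum_congr rfl (fun a _ => (G.card_neighborFinset_eq_degree a).trans (hreg a))]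
      simp [mul_comm]
    · intro a ha a' ha' hne
      simp only [Function.onFun]; rw [Finset.disjoint_left]
      intro b hb hb'
      rw [mem_neighborFinset] at hb hb'
      exact hnbr a ha a' ha' hne b hb hb'
  have hAB : ∀ a ∈ A, ∀ b, G.Adj a b → b ∈ B := by
    intro a ha b hab
    rcases hbip a b hab with ⟨_, h2⟩ | ⟨h1, _⟩
    · exact h2
    · exact absurd ha (Finset.disjoint_right.mp hdisj h1)
  have hBA : ∀ b ∈ B, ∀ a, G.Adj b a → a ∈ A := by
    intro b hb a hab
    rcases hbip b a hab with ⟨h1, _⟩ | ⟨_, h2⟩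
    · exact absurd hb (Finset.disjoint_left.mp hdisj h1)
    · exact h2
  have hN1B : N1 ⊆ B := by
    intro b hb
    obtain ⟨a, ha, hab⟩ := (hmemN1 b).mp hb
    exact hAB a (hA1 ha) b hab
  set S : Finset V := B \ N1 with hS
  set T : Finset V := A \ A1 with hT
  -- neighbors of S lie in T
  have hST : ∀ b ∈ S, G.neighborFinset b = T.filter (fun a => G.Adj b a) := by
    intro b hb
    rw [hS, Finset.mem_sdiff] at hb
    ext a
    simp only [mem_neighborFinset, Finset.mem_filter, hT, Finset.mem_sdiff]
    constructor
    · intro hba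
      refine ⟨⟨hBA b hb.1 a hba, ?_⟩, hba⟩
      intro haA1
      exact hb.2 ((hmemN1 b).mpr ⟨a, haA1, hba.symm⟩)
    · exact fun h => h.2
  -- each vertex of T has at most d-1 neighbors in S
  have hTS : ∀ a ∈ T, (S.filter (fun b => G.Adj a b)).card ≤ d - 1 := by
    intro a ha
    obtain ⟨w, haw, a', ha', ha'w⟩ := hdom a ha
    have hsub : S.filter (fun b => G.Adj a b) ⊆ G.neighborFinset a \ {w} := by
      intro b hb
      rw [Finset.mem_filter] at hb
      rw [Finset.mem_sdiff, mem_neighborFinset, Finset.mem_singleton]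
      refine ⟨hb.2, ?_⟩
      rintro rfl
      have : b ∈ N1 := (hmemN1 b).mpr ⟨a', ha', ha'w⟩
      rw [hS, Finset.mem_sdiff] at hb
      exact hb.1.2 this
    calc (S.filter (fun b => G.Adj a b)).card ≤ (G.neighborFinset a \ {w}).card :=
          Finset.card_le_card hsub
      _ ≤ (G.neighborFinset a).card - 1 := by
          rw [Finset.card_sdiff_of_subset (by simpa [mem_neighborFinset] using haw)]
          simp
      _ = d - 1 := by rw [G.card_neighborFinset_eq_degree, hreg]
  -- main counting inequality in ℕ
  have hmain : S.card * d ≤ T.card * (d - 1) := by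
    calc S.card * d = ∑ b ∈ S, (G.neighborFinset b).card := by
          rw [Finset.sum_congr rfl
            (fun b _ => (G.card_neighborFinset_eq_degree b).trans (hreg b)),
            Finset.sum_const, smul_eq_mul]
      _ = ∑ b ∈ S, (T.filter (fun a => G.Adj b a)).card :=
          Finset.sum_congr rfl (fun b hb => by rw [hST b hb])
      _ = ∑ a ∈ T, (S.filter (fun b => G.Adj a b)).card := (doublecount G T S).symm
      _ ≤ ∑ a ∈ T, (d - 1) := Finset.sum_le_sum hTS
      _ = T.card * (d - 1) := by rw [Finset.sum_const, smul_eq_mul]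
  have hScard : S.card = B.card - N1.card := Finset.card_sdiff_of_subset hN1B
  have hTcard : T.card = A.card - A1.card := Finset.card_sdiff_of_subset hA1
  have hN1le : N1.card ≤ B.card := Finset.card_le_card hN1B
  have hA1le : A1.card ≤ A.card := Finset.card_le_card hA1
  have hfirst : ((B.card : ℤ) - d * A1.card) * d ≤ ((A.card : ℤ) - A1.card) * (d - 1) := by
    have := hmain
    rw [hScard, hTcard] at this
    have h1 : ((B.card - N1.card) * d : ℕ) ≤ ((A.card - A1.card) * (d - 1) : ℕ) := this
    have h2 : (((B.card - N1.card) * d : ℕ) : ℤ) ≤ (((A.card - A1.card) * (d - 1) : ℕ) : ℤ) := by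
      exact_mod_cast h1
    push_cast [Nat.cast_sub hN1le, Nat.cast_sub hA1le,
      Nat.cast_sub (Nat.one_le_of_lt (by omega : 1 < d))] at h2
    rw [hN1card] at hN1le
    push_cast at h2 ⊢
    rw [hN1card] at h2
    push_cast at h2
    linarith
  refine ⟨hfirst, ?_⟩
  -- |A| = |B|
  have hAeqB : A.card = B.card := by
    have hda : ∀ a ∈ A, G.neighborFinset a = B.filter (fun b => G.Adj a b) := by
      intro a ha; ext b
      simp only [mem_neighborFinset, Finset.mem_filter]
      exact ⟨fun h => ⟨hAB a ha b h, h⟩, fun h => h.2⟩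
    have hdb : ∀ b ∈ B, G.neighborFinset b = A.filter (fun a => G.Adj b a) := by
      intro b hb; ext a
      simp only [mem_neighborFinset, Finset.mem_filter]
      exact ⟨fun h => ⟨hBA b hb a h, h⟩, fun h => h.2⟩
    have h1 : A.card * d = B.card * d := by
      calc A.card * d = ∑ a ∈ A, (G.neighborFinset a).card := by
            rw [Finset.sum_congr rfl
              (fun a _ => (G.card_neighborFinset_eq_degree a).trans (hreg a)),
              Finset.sum_const, smul_eq_mul]
        _ = ∑ a ∈ A, (B.filter (fun b => G.Adj a b)).card :=
            Finset.sum_congr rfl (fun a ha => by rw [hda a ha])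
        _ = ∑ b ∈ B, (A.filter (fun a => G.Adj b a)).card := doublecount G A B
        _ = ∑ b ∈ B, (G.neighborFinset b).card :=
            Finset.sum_congr rfl (fun b hb => by rw [hdb b hb])
        _ = B.card * d := by
            rw [Finset.sum_congr rfl
              (fun b _ => (G.card_neighborFinset_eq_degree b).trans (hreg b)),
              Finset.sum_const, smul_eq_mul]
    exact Nat.eq_of_mul_eq_mul_right (by omega) h1
  -- conclude
  have hd2 : d ≤ d ^ 2 := by nlinarith
  have goalZ : (A.card : ℤ) ≤ ((d : ℤ) ^ 2 - d + 1) * A1.card := by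
    have hB : (B.card : ℤ) = A.card := by exact_mod_cast hAeqB.symm
    rw [hB] at hfirst
    nlinarith [hfirst, (by exact_mod_cast hd : (3 : ℤ) ≤ d),
      (Int.natCast_nonneg A1.card : (0:ℤ) ≤ A1.card)]
  have : (A.card : ℤ) ≤ ((d ^ 2 - d + 1 : ℕ) : ℤ) * A1.card := by
    push_cast [Nat.cast_sub hd2]
    exact goalZ
  exact_mod_cast this
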